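/- Let (θ, S, X) be an ample dynamical system and (θ⁺, S⁺, X) its unitization, where S⁺ = S ⊔ {1} and θ₁ = id_X. Then the crossed products L_c(X) ⋊_α S and L_c(X) ⋊_{α⁺} S⁺ are isomorphic as K-algebras. -/

import Mathlib

/-- An inverse semigroup: a semigroup with an involution `star` such that
`a (star a) a = a`, `(star a) a (star a) = star a`, and idempotents commute. -/
class InverseSemigroup (S : Type*) extends Semigroup S, Star S where
  star_star : ∀ a : S, star (star a) = a
  mul_star_mul : ∀ a : S, a * star a * a = a
  star_mul_star : ∀ a : S, star a * a * star a = star a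
  star_mul : ∀ a b : S, star (a * b) = star b * star a
  idem_comm : ∀ e f : S, e * e = e → f * f = f → e * f = f * e

/-- The natural partial order on an inverse semigroup: `s ≤ t` iff `s = t e`
for some idempotent `e`. -/
def ISle {S : Type*} [InverseSemigroup S] (s t : S) : Prop :=
  ∃ e : S, e * e = e ∧ s = t * e

/-- An ample action of an inverse semigroup `S` on a topological space `X`:
a semigroup homomorphism `s ↦ θ s` into partial homeomorphisms between clopen
subsets of `X` (composition with largest domains encoded via
`PartialEquiv.trans` and `EqOnSource`), with `θ (star s) = (θ s).symm`, whose
domains cover `X`.  (For an ample dynamical system, `X` is moreover assumed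
locally compact, Hausdorff and totally disconnected.) -/
structure AmpleSystem (S X : Type*) [InverseSemigroup S] [TopologicalSpace X] where
  θ : S → PartialHomeomorph X X
  hom : ∀ s t : S, (θ (s * t)).toPartialEquiv.EqOnSource
    ((θ t).toPartialEquiv.trans (θ s).toPartialEquiv)
  star_eq : ∀ s : S, (θ (star s)).toPartialEquiv.EqOnSource (θ s).toPartialEquiv.symm
  clopen : ∀ s : S, IsClopen (θ s).source
  cover : ∀ x : X, ∃ s : S, x ∈ (θ s).source

variable (K : Type*) [Field K]

/-- `L_c(X)`: the locally constant, compactly supported `K`-valued functions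
on `X` (a non-unital commutative `K`-algebra under pointwise operations). -/
def LcSet (X : Type*) [TopologicalSpace X] : Set (X → K) :=
  {f | IsLocallyConstant f ∧ HasCompactSupport f}

variable {S X : Type*} [InverseSemigroup S] [TopologicalSpace X]

/-- The globally defined endomorphism `ᾱ_s` of `L_c(X)`:
`ᾱ_s(f) = α_s(f · 1_{X_{s*s}})`, i.e. `(ᾱ_s f)(x) = f (θ_{s*} x)` for
`x ∈ X_{s s*}` and `0` otherwise. -/
noncomputable def barAlpha (T : AmpleSystem S X) (s : S) (f : X → K) : X → K :=
  (T.θ s).target.indicator (fun x => f ((T.θ s).symm x))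

/-- The fiber `B_s = L_c(X_{s s*})` of the semi-direct product bundle:
elements of `L_c(X)` vanishing outside `X_{s s*} = ran θ_s`. -/
def FibSet (T : AmpleSystem S X) (s : S) : Set (X → K) :=
  {f | f ∈ LcSet K X ∧ ∀ x ∉ (T.θ s).target, f x = 0}

/-- `L_c(X_e)` for an idempotent `e`: elements of `L_c(X)` vanishing outside
`X_e = dom θ_e`. -/
def LcE (T : AmpleSystem S X) (e : S) : Set (X → K) :=
  {f | f ∈ LcSet K X ∧ ∀ x ∉ (T.θ e).source, f x = 0}

/-- A covariant representation `(π, σ)` of an ample dynamical system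
`(θ, S, X)` on a `K`-vector space `V`: a non-degenerate representation `π` of
`L_c(X)` and a semigroup homomorphism `σ : S → End(V)` with
`π (α_s f) = σ_s π(f) σ_{s*}` for `f ∈ L_c(X_{s*s})`, and
`span {π(f) ξ : f ∈ L_c(X_e)} = σ_e(V)` for each idempotent `e`.
(`π` is recorded as a map on all of `X → K`; only its values on `L_c(X)` are
constrained.) -/
structure CovRep (T : AmpleSystem S X) (V : Type*) [AddCommGroup V]
    [Module K V] where
  π : (X → K) → Module.End K V
  σ : S → Module.End K V
  π_add : ∀ f ∈ LcSet K X, ∀ g ∈ LcSet K X, π (f + g) = π f + π g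
  π_smul : ∀ (c : K), ∀ f ∈ LcSet K X, π (c • f) = c • π f
  π_mul : ∀ f ∈ LcSet K X, ∀ g ∈ LcSet K X, π (f * g) = π f * π g
  π_nondeg : Submodule.span K {ξ : V | ∃ f ∈ LcSet K X, ∃ η : V, ξ = π f η} = ⊤
  σ_hom : ∀ s t : S, σ (s * t) = σ s * σ t
  covariant : ∀ s : S, ∀ f ∈ LcE K T (star s * s),
    π (barAlpha K T s f) = σ s * π f * σ (star s)
  essential : ∀ e : S, e * e = e →
    Submodule.span K {ξ : V | ∃ f ∈ LcE K T e, ∃ η : V, ξ = π f η} =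
      LinearMap.range (σ e)

/-- The defining relations of the crossed product `L_c(X) ⋊ S`, imposed on the
free `K`-algebra on formal symbols `f δ_s` (`s ∈ S`, `f : X → K`): symbols with
`f ∉ L_c(X_{s s*})` are discarded, the symbols are `K`-linear in `f` on each
fiber, `(f δ_s)(g δ_t) = f ᾱ_s(g) δ_{s t}`, and `f δ_s = f δ_t` whenever
`s ≤ t` and `f ∈ L_c(X_{s s*})`.  The quotient is precisely the universal
(cross-sectional) algebra of the semi-direct product bundle `B^θ`. -/
inductive CPRel {S X : Type*} [InverseSemigroup S] [TopologicalSpace X]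
    (K : Type*) [Field K] (T : AmpleSystem S X) :
    FreeAlgebra K (S × (X → K)) → FreeAlgebra K (S × (X → K)) → Prop
  | zero (s : S) (f : X → K) : f ∉ FibSet K T s →
      CPRel K T (FreeAlgebra.ι K (s, f)) 0
  | add (s : S) (f g : X → K) : f ∈ FibSet K T s → g ∈ FibSet K T s →
      CPRel K T (FreeAlgebra.ι K (s, f + g))
        (FreeAlgebra.ι K (s, f) + FreeAlgebra.ι K (s, g))
  | smul (s : S) (c : K) (f : X → K) : f ∈ FibSet K T s →
      CPRel K T (FreeAlgebra.ι K (s, c • f)) (c • FreeAlgebra.ι K (s, f))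
  | mul (s t : S) (f g : X → K) : f ∈ FibSet K T s → g ∈ FibSet K T t →
      CPRel K T (FreeAlgebra.ι K (s, f) * FreeAlgebra.ι K (t, g))
        (FreeAlgebra.ι K (s * t, f * barAlpha K T s g))
  | incl (s t : S) (f : X → K) : ISle s t → f ∈ FibSet K T s →
      CPRel K T (FreeAlgebra.ι K (s, f)) (FreeAlgebra.ι K (t, f))

/-- The crossed product algebra `L_c(X) ⋊ S` of an ample dynamical system. -/
abbrev CP {S X : Type*} [InverseSemigroup S] [TopologicalSpace X]
    (K : Type*) [Field K] (T : AmpleSystem S X) :=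
  RingQuot (CPRel K T)

/-- The element `f Δ_s` of the crossed product `L_c(X) ⋊ S`. -/
noncomputable def Delta {S X : Type*} [InverseSemigroup S] [TopologicalSpace X]
    (K : Type*) [Field K] (T : AmpleSystem S X) (s : S) (f : X → K) :
    CP K T :=
  RingQuot.mkAlgHom K (CPRel K T) (FreeAlgebra.ι K (s, f))

namespace ISAux

theorem srcEq {α β : Type*} {e e' : PartialEquiv α β} (h : e.EqOnSource e') :
    e.source = e'.source := PartialEquiv.EqOnSource.source_eq h

theorem tgtEq {α β : Type*} {e e' : PartialEquiv α β} (h : e.EqOnSource e') :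
    e.target = e'.target := PartialEquiv.EqOnSource.target_eq h

theorem eqOnEq {α β : Type*} {e e' : PartialEquiv α β} (h : e.EqOnSource e') :
    e.source.EqOn e e' := PartialEquiv.EqOnSource.eqOn h

end ISAux

namespace ISAux

variable {S : Type*} [InverseSemigroup S]

theorem idem_star {e : S} (he : e * e = e) : star e = e := by
  have h1 : star e * star e = star e := by
    rw [← InverseSemigroup.star_mul, he]
  have h2 : e * star e = star e * e := InverseSemigroup.idem_comm e (star e) he h1
  have h3 : e = e * star e := by
    conv_lhs => rw [← InverseSemigroup.mul_star_mul e]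
    rw [mul_assoc, ← h2, ← mul_assoc, he]
  have h4 : star e = star e * e := by
    calc star e = star e * e * star e := (InverseSemigroup.star_mul_star e).symm
      _ = star e * (e * star e) := by rw [mul_assoc]
      _ = star e * (star e * e) := by rw [h2]
      _ = (star e * star e) * e := by rw [mul_assoc]
      _ = star e * e := by rw [h1]
  rw [h4, ← h2, ← h3]

theorem idem_mul {e f : S} (he : e * e = e) (hf : f * f = f) : (e * f) * (e * f) = e * f := by
  rw [mul_assoc, ← mul_assoc f e f, InverseSemigroup.idem_comm f e hf he,
    mul_assoc e f f, hf, ← mul_assoc, he]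

theorem idem_star_mul_self (s : S) : (star s * s) * (star s * s) = star s * s := by
  have h : star s * (s * star s * s) = star s * s := by
    rw [InverseSemigroup.mul_star_mul]
  calc (star s * s) * (star s * s) = star s * (s * star s * s) := by
        simp only [mul_assoc]
      _ = star s * s := h

theorem idem_mul_star_self (s : S) : (s * star s) * (s * star s) = s * star s := by
  have h := idem_star_mul_self (star s)
  rwa [InverseSemigroup.star_star] at h

theorem isle_refl (s : S) : ISle s s :=
  ⟨star s * s, idem_star_mul_self s, by rw [← mul_assoc, InverseSemigroup.mul_star_mul]⟩

theorem isle_mul_idem_right (s : S) {f : S} (hf : f * f = f) : ISle (s * f) s :=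
  ⟨f, hf, rfl⟩

theorem isle_idem_left {e : S} (he : e * e = e) (t : S) : ISle (e * t) t := by
  refine ⟨star t * e * t, ?_, ?_⟩
  · have h1 : (star t * e * t) * (star t * e * t) = star t * e * (t * star t) * e * t := by
      simp only [mul_assoc]
    rw [h1]
    have h2 : e * (t * star t) = (t * star t) * e :=
      InverseSemigroup.idem_comm e (t * star t) he (idem_mul_star_self t)
    calc star t * e * (t * star t) * e * t
        = star t * (e * (t * star t)) * e * t := by simp only [mul_assoc]
      _ = star t * ((t * star t) * e) * e * t := by rw [h2]
      _ = star t * (t * star t) * (e * e) * t := by simp only [mul_assoc]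
      _ = star t * (t * star t) * e * t := by rw [he]
      _ = (star t * t * star t) * e * t := by simp only [mul_assoc]
      _ = star t * e * t := by rw [InverseSemigroup.star_mul_star]
  · have h2 : e * (t * star t) = (t * star t) * e :=
      InverseSemigroup.idem_comm e (t * star t) he (idem_mul_star_self t)
    calc e * t = e * (t * star t * t) := by rw [InverseSemigroup.mul_star_mul]
      _ = (e * (t * star t)) * t := by simp only [mul_assoc]
      _ = ((t * star t) * e) * t := by rw [h2]
      _ = t * (star t * e * t) := by simp only [mul_assoc]

end ISAux

section Topo
variable {K : Type*} [Field K] {S X : Type*} [InverseSemigroup S] [TopologicalSpace X]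

namespace ISAux
variable (T : AmpleSystem S X)

theorem source_star (s : S) : (T.θ (star s)).source = (T.θ s).target :=
  srcEq (T.star_eq s)

theorem clopen_target (s : S) : IsClopen (T.θ s).target := by
  rw [← source_star]; exact T.clopen _

theorem apply_idem {e : S} (he : e * e = e) {x : X} (hx : x ∈ (T.θ e).source) :
    T.θ e x = x := by
  have h := T.hom e e
  rw [he] at h
  have hx' : (T.θ e) x ∈ (T.θ e).source := by
    have h2 : x ∈ ((T.θ e).toPartialEquiv.trans (T.θ e).toPartialEquiv).source := by
      rw [← srcEq h]; exact hx
    rw [PartialEquiv.trans_source] at h2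
    exact h2.2
  have heq : (T.θ e) x = (T.θ e) ((T.θ e) x) := by
    have := eqOnEq h hx
    simpa using this
  exact ((T.θ e).injOn hx hx' heq).symm

theorem source_eq_target {e : S} (he : e * e = e) :
    (T.θ e).source = (T.θ e).target := by
  have h := source_star T e
  rw [idem_star he] at h
  rw [← h]

theorem symm_idem {e : S} (he : e * e = e) {x : X} (hx : x ∈ (T.θ e).source) :
    (T.θ e).symm x = x := by
  conv_lhs => rw [← apply_idem T he hx]
  exact (T.θ e).left_inv hx

theorem source_mul_idem {e f : S} (he : e * e = e) (hf : f * f = f) :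
    (T.θ (e * f)).source = (T.θ e).source ∩ (T.θ f).source := by
  have h := srcEq (T.hom e f)
  rw [PartialEquiv.trans_source] at h
  simp only [PartialHomeomorph.coe_toPartialEquiv] at h
  rw [h]
  ext x
  constructor
  · rintro ⟨hxf, hxe⟩
    rw [Set.mem_preimage, apply_idem T hf hxf] at hxe
    exact ⟨hxe, hxf⟩
  · rintro ⟨hxe, hxf⟩
    refine ⟨hxf, ?_⟩
    rw [Set.mem_preimage, apply_idem T hf hxf]
    exact hxe

theorem source_star_mul_self (s : S) :
    (T.θ (star s * s)).source = (T.θ s).source := by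
  have h := srcEq (T.hom (star s) s)
  rw [PartialEquiv.trans_source] at h
  simp only [PartialHomeomorph.coe_toPartialEquiv] at h
  rw [h, source_star]
  ext x
  constructor
  · rintro ⟨hx, _⟩; exact hx
  · intro hx
    exact ⟨hx, Set.mem_preimage.2 ((T.θ s).map_source hx)⟩

theorem mem_target_mul (s t : S) :
    (T.θ (s * t)).target
      = (T.θ s).target ∩ (T.θ s).symm ⁻¹' (T.θ t).target := by
  have h := tgtEq (T.hom s t)
  rw [PartialEquiv.trans_target] at h
  exact h

theorem target_mul_idem {e f : S} (he : e * e = e) (hf : f * f = f) :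
    (T.θ (e * f)).target = (T.θ e).source ∩ (T.θ f).source := by
  rw [← source_eq_target T (idem_mul he hf), source_mul_idem T he hf]

/-- locally constant indicator -/
theorem isLocallyConstant_indicator {W : Set X} (hW : IsClopen W) {f : X → K}
    (hf : IsLocallyConstant f) : IsLocallyConstant (W.indicator f) := by
  rw [IsLocallyConstant.iff_exists_open]
  intro x
  by_cases hx : x ∈ W
  · obtain ⟨U, hU, hxU, hUeq⟩ := hf.exists_open x
    refine ⟨W ∩ U, hW.isOpen.inter hU, ⟨hx, hxU⟩, ?_⟩
    rintro x' ⟨hx'W, hx'U⟩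
    rw [Set.indicator_of_mem hx'W, Set.indicator_of_mem hx, hUeq x' hx'U]
  · refine ⟨Wᶜ, hW.compl.isOpen, hx, ?_⟩
    intro x' hx'
    rw [Set.indicator_of_notMem hx', Set.indicator_of_notMem hx]

theorem barAlpha_isLocallyConstant (s : S) {g : X → K} (hg : IsLocallyConstant g) :
    IsLocallyConstant (barAlpha K T s g) := by
  rw [IsLocallyConstant.iff_exists_open]
  intro x
  by_cases hx : x ∈ (T.θ s).target
  · obtain ⟨U, hU, hyU, hUeq⟩ := hg.exists_open ((T.θ s).symm x)
    refine ⟨(T.θ s).target ∩ (T.θ s).symm ⁻¹' U, ?_, ⟨hx, hyU⟩, ?_⟩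
    · have := (T.θ s).continuousOn_symm.isOpen_inter_preimage (clopen_target T s).isOpen hU
      simpa using this
    · rintro x' ⟨hx'T, hx'U⟩
      show Set.indicator _ _ _ = Set.indicator _ _ _
      rw [Set.indicator_of_mem hx'T, Set.indicator_of_mem hx]
      exact hUeq _ hx'U
  · refine ⟨(T.θ s).targetᶜ, (clopen_target T s).compl.isOpen, hx, ?_⟩
    intro x' hx'
    show Set.indicator _ _ _ = Set.indicator _ _ _
    rw [Set.indicator_of_notMem hx', Set.indicator_of_notMem hx]

theorem barAlpha_add (s : S) (g g' : X → K) :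
    barAlpha K T s (g + g') = barAlpha K T s g + barAlpha K T s g' := by
  funext x
  by_cases hx : x ∈ (T.θ s).target <;>
    simp [barAlpha, Set.indicator_of_mem, Set.indicator_of_notMem, hx]

theorem barAlpha_smul (s : S) (c : K) (g : X → K) :
    barAlpha K T s (c • g) = c • barAlpha K T s g := by
  funext x
  by_cases hx : x ∈ (T.θ s).target <;>
    simp [barAlpha, Set.indicator_of_mem, Set.indicator_of_notMem, hx]

theorem barAlpha_idem {e : S} (he : e * e = e) (g : X → K) :
    barAlpha K T e g = ((T.θ e).source).indicator g := by
  funext x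
  by_cases hx : x ∈ (T.θ e).source
  · have hx' : x ∈ (T.θ e).target := by rwa [← source_eq_target T he]
    rw [barAlpha, Set.indicator_of_mem hx', Set.indicator_of_mem hx, symm_idem T he hx]
  · have hx' : x ∉ (T.θ e).target := by rwa [← source_eq_target T he]
    rw [barAlpha, Set.indicator_of_notMem hx', Set.indicator_of_notMem hx]

/- LcSet closure properties -/

theorem zero_mem_Lc : (0 : X → K) ∈ LcSet K X :=
  ⟨IsLocallyConstant.const 0, by simpa using (HasCompactSupport.zero (α := X) (β := K))⟩

theorem add_mem_Lc {f g : X → K} (hf : f ∈ LcSet K X) (hg : g ∈ LcSet K X) :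
    f + g ∈ LcSet K X :=
  ⟨hf.1.comp₂ hg.1 (· + ·), hf.2.add hg.2⟩

theorem smul_mem_Lc (c : K) {f : X → K} (hf : f ∈ LcSet K X) : c • f ∈ LcSet K X := by
  refine ⟨?_, ?_⟩
  · have := hf.1.comp (fun y => c * y)
    exact this
  · apply hf.2.mono
    intro x hx
    simp only [Function.mem_support, Pi.smul_apply, smul_eq_mul] at hx ⊢
    intro h0; apply hx; rw [h0, mul_zero]

theorem mul_mem_Lc {f g : X → K} (hf : f ∈ LcSet K X) (hg : g ∈ LcSet K X) :
    f * g ∈ LcSet K X :=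
  ⟨hf.1.comp₂ hg.1 (· * ·), hf.2.mul_right⟩

theorem neg_mem_Lc {f : X → K} (hf : f ∈ LcSet K X) : -f ∈ LcSet K X := by
  have := smul_mem_Lc (-1 : K) hf
  simpa using this

theorem zero_mem_Fib (s : S) : (0 : X → K) ∈ FibSet K T s :=
  ⟨zero_mem_Lc, fun _ _ => rfl⟩

theorem add_mem_Fib {s : S} {f g : X → K} (hf : f ∈ FibSet K T s) (hg : g ∈ FibSet K T s) :
    f + g ∈ FibSet K T s :=
  ⟨add_mem_Lc hf.1 hg.1, fun x hx => by
    simp only [Pi.add_apply, hf.2 x hx, hg.2 x hx, add_zero]⟩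

theorem smul_mem_Fib {s : S} (c : K) {f : X → K} (hf : f ∈ FibSet K T s) :
    c • f ∈ FibSet K T s :=
  ⟨smul_mem_Lc c hf.1, fun x hx => by
    simp only [Pi.smul_apply, hf.2 x hx, smul_zero]⟩

end ISAux

end Topo
section PartD
namespace ISAux
variable {K : Type*} [Field K] {S X : Type*} [InverseSemigroup S] [TopologicalSpace X]
variable (T : AmpleSystem S X)

theorem Delta_eq_zero {s : S} {f : X → K} (h : f ∉ FibSet K T s) :
    Delta K T s f = 0 := by
  have h2 := RingQuot.mkAlgHom_rel K (CPRel.zero (K := K) (T := T) s f h)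
  simpa [Delta] using h2

theorem Delta_add {s : S} {f g : X → K} (hf : f ∈ FibSet K T s) (hg : g ∈ FibSet K T s) :
    Delta K T s (f + g) = Delta K T s f + Delta K T s g := by
  have h2 := RingQuot.mkAlgHom_rel K (CPRel.add (K := K) (T := T) s f g hf hg)
  simpa [Delta, map_add] using h2

theorem Delta_smul {s : S} (c : K) {f : X → K} (hf : f ∈ FibSet K T s) :
    Delta K T s (c • f) = c • Delta K T s f := by
  have h2 := RingQuot.mkAlgHom_rel K (CPRel.smul (K := K) (T := T) s c f hf)
  simpa [Delta, map_smul] using h2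

theorem Delta_mul {s t : S} {f g : X → K} (hf : f ∈ FibSet K T s) (hg : g ∈ FibSet K T t) :
    Delta K T s f * Delta K T t g = Delta K T (s * t) (f * barAlpha K T s g) := by
  have h2 := RingQuot.mkAlgHom_rel K (CPRel.mul (K := K) (T := T) s t f g hf hg)
  simpa [Delta, map_mul] using h2

theorem Delta_incl {s t : S} {f : X → K} (hle : ISle s t) (hf : f ∈ FibSet K T s) :
    Delta K T s f = Delta K T t f :=
  RingQuot.mkAlgHom_rel K (CPRel.incl (K := K) (T := T) s t f hle hf)

theorem Delta_zero_fun (s : S) : Delta K T s (0 : X → K) = 0 := by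
  have h0 : ((0 : K) • (0 : X → K)) = 0 := by simp
  calc Delta K T s (0 : X → K) = Delta K T s ((0 : K) • (0 : X → K)) := by rw [h0]
    _ = (0 : K) • Delta K T s (0 : X → K) := Delta_smul T 0 (zero_mem_Fib T s)
    _ = 0 := zero_smul _ _

theorem Delta_neg {s : S} {f : X → K} (hf : f ∈ FibSet K T s) :
    Delta K T s (-f) = -Delta K T s f := by
  have h : (-f) = (-1 : K) • f := by funext x; simp
  rw [h, Delta_smul T _ hf]
  exact neg_one_smul K (Delta K T s f)

theorem sum_mem_Fib {ι : Type*} (F : Finset ι) (s : S) (p : ι → X → K)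
    (hp : ∀ i ∈ F, p i ∈ FibSet K T s) :
    (∑ i ∈ F, p i) ∈ FibSet K T s := by
  classical
  induction F using Finset.cons_induction with
  | empty => simpa using zero_mem_Fib T s
  | cons a F ha ih =>
    rw [Finset.sum_cons]
    exact add_mem_Fib T (hp a (Finset.mem_cons_self a F))
      (ih (fun i hi => hp i (Finset.mem_cons_of_mem hi)))

theorem Delta_finset_sum {ι : Type*} (F : Finset ι) (s : S) (p : ι → X → K)
    (hp : ∀ i ∈ F, p i ∈ FibSet K T s) :
    Delta K T s (∑ i ∈ F, p i) = ∑ i ∈ F, Delta K T s (p i) := by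
  classical
  induction F using Finset.cons_induction with
  | empty => simpa using Delta_zero_fun T s
  | cons a F ha ih =>
    rw [Finset.sum_cons, Finset.sum_cons,
      Delta_add T (hp a (Finset.mem_cons_self a F))
        (sum_mem_Fib T F s p (fun i hi => hp i (Finset.mem_cons_of_mem hi))),
      ih (fun i hi => hp i (Finset.mem_cons_of_mem hi))]

theorem Delta_bridge {e e' : S} (he : e * e = e) (he' : e' * e' = e') {h : X → K}
    (hLc : h ∈ LcSet K X) (hsupp : ∀ x ∉ (T.θ e).source, h x = 0)
    (hsupp' : ∀ x ∉ (T.θ e').source, h x = 0) :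
    Delta K T e h = Delta K T e' h := by
  have hmem : h ∈ FibSet K T (e * e') := by
    refine ⟨hLc, fun x hx => ?_⟩
    rw [target_mul_idem T he he'] at hx
    rcases (by tauto : x ∉ (T.θ e).source ∨ x ∉ (T.θ e').source) with h1 | h1
    · exact hsupp x h1
    · exact hsupp' x h1
  have h1 : Delta K T (e * e') h = Delta K T e h :=
    Delta_incl T (isle_mul_idem_right e he') hmem
  have hcomm : e * e' = e' * e := InverseSemigroup.idem_comm e e' he he'
  have hmem2 : h ∈ FibSet K T (e' * e) := by rwa [← hcomm]
  have h2 : Delta K T (e' * e) h = Delta K T e' h :=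
    Delta_incl T (isle_mul_idem_right e' he) hmem2
  rw [← h1, hcomm, h2]

end ISAux
end PartD
section PartE
namespace ISAux
variable {K : Type*} [Field K] {S X : Type*} [InverseSemigroup S] [TopologicalSpace X]
variable (T : AmpleSystem S X)

theorem indicator_mem_Lc {W : Set X} (hW : IsClopen W) (hWc : IsCompact W)
    {g : X → K} (hg : IsLocallyConstant g) : W.indicator g ∈ LcSet K X := by
  refine ⟨isLocallyConstant_indicator hW hg, ?_⟩
  show IsCompact (tsupport _)
  apply IsCompact.of_isClosed_subset hWc isClosed_closure
  apply closure_minimal _ hW.isClosed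
  intro x hx
  by_contra hxW
  exact hx (Set.indicator_of_notMem hxW g)

theorem indicator_const_mem_Fib {e : S} (he : e * e = e) {W : Set X} (hW : IsClopen W)
    (hWc : IsCompact W) (hsub : W ⊆ (T.θ e).source) (k : K) :
    W.indicator (fun _ => k) ∈ FibSet K T e := by
  refine ⟨indicator_mem_Lc hW hWc (IsLocallyConstant.const k), fun x hx => ?_⟩
  rw [← source_eq_target T he] at hx
  exact Set.indicator_of_notMem (fun hmem => hx (hsub hmem)) _

theorem valJ_zero {ι : Type*} [Fintype ι] (e : ι → S) (h : ι → X → K)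
    (hid : ∀ i, e i * e i = e i) (hfib : ∀ i, h i ∈ FibSet K T (e i))
    (hsum : ∑ i, h i = 0) :
    ∑ i, Delta K T (e i) (h i) = 0 := by
  classical
  set v : X → ι → K := fun x i => h i x with hv
  have hvlc : IsLocallyConstant v := by
    rw [IsLocallyConstant.iff_exists_open]
    intro x
    choose U hU hxU hUeq using fun i => (hfib i).1.1.exists_open x
    refine ⟨⋂ i, U i, isOpen_iInter_of_finite hU, Set.mem_iInter.2 hxU, ?_⟩
    intro x' hx'
    funext i
    exact hUeq i x' (Set.mem_iInter.1 hx' i)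
  set C : Set X := ⋃ i, tsupport (h i) with hCdef
  have hC : IsCompact C := isCompact_iUnion (fun i => (hfib i).1.2)
  have hfin : (v '' C).Finite := by
    haveI : CompactSpace C := isCompact_iff_compactSpace.mp hC
    have h1 : IsLocallyConstant (fun z : C => v z) :=
      hvlc.comp_continuous continuous_subtype_val
    have h2 := h1.range_finite
    rw [Set.image_eq_range]
    exact h2
  have hFin2 : (insert (0 : ι → K) (v '' C)).Finite := hfin.insert 0
  set F : Finset (ι → K) := hFin2.toFinset with hF
  have hvF : ∀ x, v x ∈ F := by
    intro x
    rw [hF, Set.Finite.mem_toFinset]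
    by_cases hx : x ∈ C
    · exact Set.mem_insert_of_mem _ ⟨x, hx, rfl⟩
    · have hvx : v x = 0 := by
        funext i
        by_contra h0
        exact hx (Set.mem_iUnion.2 ⟨i, subset_tsupport _ h0⟩)
      rw [hvx]; exact Set.mem_insert _ _
  set W : (ι → K) → Set X := fun c => v ⁻¹' {c} with hW
  have hWclopen : ∀ c, IsClopen (W c) := fun c =>
    ⟨hvlc.isClosed_fiber c, hvlc.isOpen_fiber c⟩
  have hWsub : ∀ (c : ι → K) (i : ι), c i ≠ 0 → W c ⊆ (T.θ (e i)).source := by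
    intro c i hci x hx
    have hxi : h i x = c i := congrFun hx i
    have hxt : x ∈ (T.θ (e i)).target := by
      by_contra hxt
      exact hci (by rw [← hxi]; exact (hfib i).2 x hxt)
    rwa [source_eq_target T (hid i)]
  have hWcpt : ∀ c : ι → K, c ≠ 0 → IsCompact (W c) := by
    intro c hc
    obtain ⟨i, hi⟩ : ∃ i, c i ≠ 0 := by
      by_contra hno; push_neg at hno; exact hc (funext hno)
    apply IsCompact.of_isClosed_subset hC (hWclopen c).isClosed
    intro x hx
    have hxi : h i x = c i := congrFun hx i
    exact Set.mem_iUnion.2 ⟨i, subset_tsupport _ (by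
      rw [Function.mem_support, hxi]; exact hi)⟩
  set piece : (ι → K) → ι → (X → K) := fun c i => (W c).indicator (fun _ => c i) with hpiece
  have hdecomp : ∀ i, h i = ∑ c ∈ F, piece c i := by
    intro i; funext x
    rw [Finset.sum_apply]
    rw [Finset.sum_eq_single (v x)]
    · simp only [hpiece]
      rw [Set.indicator_of_mem (show x ∈ W (v x) from rfl)]
    · intro c hcF hne
      simp only [hpiece]
      exact Set.indicator_of_notMem (fun hxc => hne (Eq.symm (hxc : v x = c)))
        (fun _ => c i)
    · intro hvx; exact absurd (hvF x) hvx
  have hpieceFib : ∀ (c : ι → K), c ∈ F → ∀ i, piece c i ∈ FibSet K T (e i) := by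
    intro c _ i
    by_cases hci : c i = 0
    · have hz : piece c i = 0 := by
        funext x; simp [hpiece, hci, Set.indicator_apply]
      rw [hz]; exact zero_mem_Fib T (e i)
    · have hc0 : c ≠ 0 := fun h0 => hci (by rw [h0]; rfl)
      exact indicator_const_mem_Fib T (hid i) (hWclopen c) (hWcpt c hc0) (hWsub c i hci) (c i)
  calc ∑ i, Delta K T (e i) (h i)
      = ∑ i, ∑ c ∈ F, Delta K T (e i) (piece c i) := by
        refine Finset.sum_congr rfl (fun i _ => ?_)
        conv_lhs => rw [hdecomp i]
        exact Delta_finset_sum T F (e i) (fun c => piece c i) (fun c hc => hpieceFib c hc i)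
    _ = ∑ c ∈ F, ∑ i, Delta K T (e i) (piece c i) := Finset.sum_comm
    _ = 0 := by
        refine Finset.sum_eq_zero (fun c hc => ?_)
        by_cases hc0 : c = 0
        · refine Finset.sum_eq_zero (fun i _ => ?_)
          have hz : piece c i = 0 := by
            funext x; simp [hpiece, hc0, Set.indicator_apply]
          rw [hz]; exact Delta_zero_fun T (e i)
        · obtain ⟨i₀, hi₀⟩ : ∃ i, c i ≠ 0 := by
            by_contra hno; push_neg at hno; exact hc0 (funext hno)
          have hstep : ∀ i, Delta K T (e i) (piece c i) = Delta K T (e i₀) (piece c i) := by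
            intro i
            by_cases hci : c i = 0
            · have hz : piece c i = 0 := by
                funext x; simp [hpiece, hci, Set.indicator_apply]
              rw [hz, Delta_zero_fun, Delta_zero_fun]
            · refine Delta_bridge T (hid i) (hid i₀) ?_ ?_ ?_
              · exact (hpieceFib c hc i).1
              · intro x hx
                exact Set.indicator_of_notMem (fun hmem => hx (hWsub c i hci hmem)) _
              · intro x hx
                exact Set.indicator_of_notMem (fun hmem => hx (hWsub c i₀ hi₀ hmem)) _
          rw [Finset.sum_congr rfl (fun i _ => hstep i)]
          have hmemFib : ∀ i ∈ (Finset.univ : Finset ι), piece c i ∈ FibSet K T (e i₀) := by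
            intro i _
            by_cases hci : c i = 0
            · have hz : piece c i = 0 := by
                funext x; simp [hpiece, hci, Set.indicator_apply]
              rw [hz]; exact zero_mem_Fib T (e i₀)
            · have hc0' : c ≠ 0 := fun h0 => hci (by rw [h0]; rfl)
              exact indicator_const_mem_Fib T (hid i₀) (hWclopen c) (hWcpt c hc0')
                (hWsub c i₀ hi₀) (c i)
          rw [← Delta_finset_sum T Finset.univ (e i₀) (fun i => piece c i) hmemFib]
          have hzero : (∑ i, piece c i) = 0 := by
            funext x
            rw [Finset.sum_apply]
            by_cases hx : x ∈ W c
            · have hvx : v x = c := hx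
              have hpx : ∀ i, piece c i x = h i x := by
                intro i
                simp only [hpiece]
                rw [Set.indicator_of_mem hx]
                exact (congrFun hvx i).symm
              rw [Finset.sum_congr rfl (fun i _ => hpx i)]
              calc ∑ i, h i x = (∑ i, h i) x := (Finset.sum_apply _ _ _).symm
                _ = 0 := by rw [hsum]; rfl
            · simp [hpiece, Set.indicator_of_notMem hx]
          rw [hzero, Delta_zero_fun]

end ISAux
end PartE
section PartF
namespace ISAux
variable {K : Type*} [Field K] {S X : Type*} [InverseSemigroup S] [TopologicalSpace X]
variable (T : AmpleSystem S X)

theorem sum_mem_Lc {ι : Type*} (F : Finset ι) (p : ι → X → K)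
    (hp : ∀ i ∈ F, p i ∈ LcSet K X) : (∑ i ∈ F, p i) ∈ LcSet K X := by
  classical
  induction F using Finset.cons_induction with
  | empty => simpa using zero_mem_Lc
  | cons a F ha ih =>
    rw [Finset.sum_cons]
    exact add_mem_Lc (hp a (Finset.mem_cons_self a F))
      (ih (fun i hi => hp i (Finset.mem_cons_of_mem hi)))

theorem exists_decomp_aux (L : List S) : ∀ f : X → K, f ∈ LcSet K X →
    tsupport f ⊆ (⋃ s ∈ L, (T.θ s).source) →
    ∃ (n : ℕ) (e : Fin n → S) (h : Fin n → X → K),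
      (∀ i, e i * e i = e i) ∧ (∀ i, h i ∈ FibSet K T (e i)) ∧ ∑ i, h i = f := by
  induction L with
  | nil =>
    intro f hf hsub
    refine ⟨0, Fin.elim0, Fin.elim0, fun i => i.elim0, fun i => i.elim0, ?_⟩
    have hf0 : f = 0 := by
      funext x
      by_contra hx
      have : x ∈ tsupport f := subset_tsupport f hx
      simpa using hsub this
    rw [hf0]
    simp
  | cons s L ih =>
    intro f hf hsub
    set U := (T.θ s).source with hU
    have hUclopen : IsClopen U := T.clopen s
    set f1 : X → K := U.indicator f with hf1
    set f2 : X → K := Uᶜ.indicator f with hf2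
    have hsplit : f1 + f2 = f := by
      funext x
      by_cases hx : x ∈ U
      · simp [hf1, hf2, Set.indicator_of_mem hx,
          Set.indicator_of_notMem (Set.notMem_compl_iff.2 hx)]
      · simp [hf1, hf2, Set.indicator_of_notMem hx,
          Set.indicator_of_mem (Set.mem_compl hx)]
    have hf1supp : ∀ x, f1 x ≠ 0 → f x ≠ 0 := by
      intro x hx h0
      apply hx
      simp [hf1, h0]
    have hf2supp : ∀ x, f2 x ≠ 0 → f x ≠ 0 := by
      intro x hx h0
      apply hx
      simp [hf2, h0]
    have hf1Lc : f1 ∈ LcSet K X :=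
      ⟨isLocallyConstant_indicator hUclopen hf.1,
        hf.2.mono (fun x hx => hf1supp x hx)⟩
    have hf2Lc : f2 ∈ LcSet K X :=
      ⟨isLocallyConstant_indicator hUclopen.compl hf.1,
        hf.2.mono (fun x hx => hf2supp x hx)⟩
    have hf1Fib : f1 ∈ FibSet K T (star s * s) := by
      refine ⟨hf1Lc, fun x hx => ?_⟩
      rw [← source_eq_target T (idem_star_mul_self s), source_star_mul_self] at hx
      exact Set.indicator_of_notMem hx f
    have hf2sub : tsupport f2 ⊆ ⋃ t ∈ L, (T.θ t).source := by
      have h1 : tsupport f2 ⊆ Uᶜ := by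
        apply closure_minimal _ hUclopen.compl.isClosed
        intro x hx
        by_contra hxU
        rw [Set.notMem_compl_iff] at hxU
        exact hx (Set.indicator_of_notMem (Set.notMem_compl_iff.2 hxU) f)
      have h2 : tsupport f2 ⊆ tsupport f := by
        apply closure_mono
        intro x hx
        exact hf2supp x hx
      intro x hx
      have hx1 := h2.trans hsub hx
      rw [Set.mem_iUnion] at hx1 ⊢
      obtain ⟨t, ht⟩ := hx1
      rw [Set.mem_iUnion] at ht
      obtain ⟨htL, hxt⟩ := ht
      rcases List.mem_cons.1 htL with rfl | htL'
      · exact absurd hxt (h1 hx)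
      · exact ⟨t, Set.mem_iUnion.2 ⟨htL', hxt⟩⟩
    obtain ⟨n, e, h, h1, h2, h3⟩ := ih f2 hf2Lc hf2sub
    refine ⟨n + 1, Fin.cons (star s * s) e, Fin.cons f1 h, ?_, ?_, ?_⟩
    · intro i
      refine Fin.cases ?_ ?_ i
      · exact idem_star_mul_self s
      · intro j; simpa using h1 j
    · intro i
      refine Fin.cases ?_ ?_ i
      · exact hf1Fib
      · intro j; simpa using h2 j
    · rw [Fin.sum_cons, h3, hsplit]

theorem exists_decomp {f : X → K} (hf : f ∈ LcSet K X) :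
    ∃ (n : ℕ) (e : Fin n → S) (h : Fin n → X → K),
      (∀ i, e i * e i = e i) ∧ (∀ i, h i ∈ FibSet K T (e i)) ∧ ∑ i, h i = f := by
  have hcover : tsupport f ⊆ ⋃ s : S, (T.θ s).source := by
    intro x _
    obtain ⟨s, hs⟩ := T.cover x
    exact Set.mem_iUnion.2 ⟨s, hs⟩
  obtain ⟨t, ht⟩ := hf.2.elim_finite_subcover (fun s : S => (T.θ s).source)
    (fun s => (T.clopen s).isOpen) hcover
  apply exists_decomp_aux T t.toList f hf
  intro x hx
  have := ht hx
  rw [Set.mem_iUnion] at this ⊢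
  obtain ⟨s, hs⟩ := this
  rw [Set.mem_iUnion] at hs
  obtain ⟨hst, hxs⟩ := hs
  exact ⟨s, Set.mem_iUnion.2 ⟨Finset.mem_toList.2 hst, hxs⟩⟩

/-- well-definedness of the decomposition value -/
theorem decomp_unique {ι κ : Type*} [Fintype ι] [Fintype κ] {f : X → K}
    (e : ι → S) (h : ι → X → K) (he : ∀ i, e i * e i = e i)
    (hfib : ∀ i, h i ∈ FibSet K T (e i)) (hsum : ∑ i, h i = f)
    (e' : κ → S) (h' : κ → X → K) (he' : ∀ j, e' j * e' j = e' j)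
    (hfib' : ∀ j, h' j ∈ FibSet K T (e' j)) (hsum' : ∑ j, h' j = f) :
    ∑ i, Delta K T (e i) (h i) = ∑ j, Delta K T (e' j) (h' j) := by
  have key := valJ_zero T (ι := ι ⊕ κ) (Sum.elim e e')
    (Sum.elim h (fun j => -(h' j)))
    (fun i => by cases i with
      | inl i => exact he i
      | inr j => exact he' j)
    (fun i => by cases i with
      | inl i => exact hfib i
      | inr j =>
        have := smul_mem_Fib T (-1 : K) (hfib' j)
        simpa using this)
    (by
      rw [Fintype.sum_sum_type]
      simp only [Sum.elim_inl, Sum.elim_inr]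
      rw [hsum, Finset.sum_neg_distrib, hsum']
      exact add_neg_cancel f)
  rw [Fintype.sum_sum_type] at key
  simp only [Sum.elim_inl, Sum.elim_inr] at key
  have key2 : ∑ i, Delta K T (e i) (h i) + ∑ j, Delta K T (e' j) (-(h' j)) = 0 := key
  have key3 : ∀ j, Delta K T (e' j) (-(h' j)) = -(Delta K T (e' j) (h' j)) :=
    fun j => Delta_neg T (hfib' j)
  rw [Finset.sum_congr rfl (fun j _ => key3 j), Finset.sum_neg_distrib] at key2
  have := add_eq_zero_iff_eq_neg.mp key2
  rw [this, neg_neg]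

end ISAux
end PartF
section PartG
namespace ISAux
variable {K : Type*} [Field K] {S X : Type*} [InverseSemigroup S] [TopologicalSpace X]
variable (T : AmpleSystem S X)

open scoped Classical in
noncomputable def Jmap (f : X → K) : CP K T :=
  if h : ∃ d : Σ n : ℕ, (Fin n → S) × (Fin n → X → K),
      (∀ i, d.2.1 i * d.2.1 i = d.2.1 i) ∧ (∀ i, d.2.2 i ∈ FibSet K T (d.2.1 i)) ∧
        (∑ i, d.2.2 i = f)
  then ∑ i, Delta K T (h.choose.2.1 i) (h.choose.2.2 i)
  else 0

theorem Jmap_spec {ι : Type*} [Fintype ι] {f : X → K} (e : ι → S) (h : ι → X → K)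
    (he : ∀ i, e i * e i = e i) (hfib : ∀ i, h i ∈ FibSet K T (e i))
    (hsum : ∑ i, h i = f) :
    Jmap T f = ∑ i, Delta K T (e i) (h i) := by
  classical
  have hex : ∃ d : Σ n : ℕ, (Fin n → S) × (Fin n → X → K),
      (∀ i, d.2.1 i * d.2.1 i = d.2.1 i) ∧ (∀ i, d.2.2 i ∈ FibSet K T (d.2.1 i)) ∧
        (∑ i, d.2.2 i = f) := by
    refine ⟨⟨Fintype.card ι, e ∘ (Fintype.equivFin ι).symm, h ∘ (Fintype.equivFin ι).symm⟩,
      fun i => he _, fun i => hfib _, ?_⟩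
    rw [← hsum]
    exact Equiv.sum_comp (Fintype.equivFin ι).symm h
  rw [Jmap, dif_pos hex]
  obtain ⟨hd1, hd2, hd3⟩ := hex.choose_spec
  exact decomp_unique T _ _ hd1 hd2 hd3 e h he hfib hsum

theorem Jmap_not_Lc {f : X → K} (hf : f ∉ LcSet K X) : Jmap T f = 0 := by
  rw [Jmap, dif_neg]
  rintro ⟨d, h1, h2, h3⟩
  apply hf
  rw [← h3]
  exact sum_mem_Lc Finset.univ _ (fun i _ => (h2 i).1)

theorem Jmap_of_Fib {e : S} (he : e * e = e) {f : X → K} (hf : f ∈ FibSet K T e) :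
    Jmap T f = Delta K T e f := by
  have h := Jmap_spec T (ι := Fin 1) (fun _ => e) (fun _ => f) (fun _ => he) (fun _ => hf)
    (by rw [Fin.sum_univ_one])
  rw [h, Fin.sum_univ_one]

theorem Jmap_add {f g : X → K} (hf : f ∈ LcSet K X) (hg : g ∈ LcSet K X) :
    Jmap T (f + g) = Jmap T f + Jmap T g := by
  obtain ⟨n, e, h, he, hfib, hsum⟩ := exists_decomp T hf
  obtain ⟨m, e', h', he', hfib', hsum'⟩ := exists_decomp T hg
  rw [Jmap_spec T e h he hfib hsum, Jmap_spec T e' h' he' hfib' hsum']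
  rw [Jmap_spec T (ι := Fin n ⊕ Fin m) (Sum.elim e e') (Sum.elim h h')
    (fun i => by cases i with
      | inl i => exact he i
      | inr j => exact he' j)
    (fun i => by cases i with
      | inl i => exact hfib i
      | inr j => exact hfib' j)
    (by rw [Fintype.sum_sum_type]
        simp only [Sum.elim_inl, Sum.elim_inr]
        rw [hsum, hsum'])]
  rw [Fintype.sum_sum_type]
  simp only [Sum.elim_inl, Sum.elim_inr]

theorem Jmap_smul (c : K) {f : X → K} (hf : f ∈ LcSet K X) :
    Jmap T (c • f) = c • Jmap T f := by
  obtain ⟨n, e, h, he, hfib, hsum⟩ := exists_decomp T hf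
  rw [Jmap_spec T e h he hfib hsum]
  rw [Jmap_spec T e (fun i => c • h i) he (fun i => smul_mem_Fib T c (hfib i))
    (by rw [← Finset.smul_sum, hsum])]
  rw [Finset.smul_sum]
  exact Finset.sum_congr rfl (fun i _ => Delta_smul T c (hfib i))

theorem barAlpha_finset_sum {ι : Type*} (F : Finset ι) (s : S) (p : ι → X → K) :
    barAlpha K T s (∑ i ∈ F, p i) = ∑ i ∈ F, barAlpha K T s (p i) := by
  funext x
  rw [Finset.sum_apply]
  by_cases hx : x ∈ (T.θ s).target
  · rw [barAlpha, Set.indicator_of_mem hx, Finset.sum_apply]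
    exact Finset.sum_congr rfl (fun i _ => by rw [barAlpha, Set.indicator_of_mem hx])
  · rw [barAlpha, Set.indicator_of_notMem hx]
    exact (Finset.sum_eq_zero (fun i _ => by rw [barAlpha, Set.indicator_of_notMem hx])).symm

/-- membership facts for products with barAlpha -/
theorem mul_barAlpha_mem_Fib {s : S} {f g : X → K} (hf : f ∈ FibSet K T s)
    (hg : g ∈ LcSet K X) : f * barAlpha K T s g ∈ FibSet K T s := by
  refine ⟨⟨hf.1.1.comp₂ (barAlpha_isLocallyConstant T s hg.1) (· * ·), hf.1.2.mul_right⟩,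
    fun x hx => ?_⟩
  show f x * _ = 0
  rw [barAlpha, Set.indicator_of_notMem hx, mul_zero]

theorem mul_barAlpha_mem_Fib_mul {s t : S} {f g : X → K} (hf : f ∈ FibSet K T s)
    (hgLc : g ∈ LcSet K X) (hg : ∀ x ∉ (T.θ t).target, g x = 0) :
    f * barAlpha K T s g ∈ FibSet K T (s * t) := by
  refine ⟨⟨hf.1.1.comp₂ (barAlpha_isLocallyConstant T s hgLc.1) (· * ·), hf.1.2.mul_right⟩,
    fun x hx => ?_⟩
  rw [mem_target_mul] at hx
  show f x * _ = 0
  by_cases hx1 : x ∈ (T.θ s).target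
  · have hx2 : (T.θ s).symm x ∉ (T.θ t).target := by
      intro hmem
      exact hx ⟨hx1, hmem⟩
    rw [barAlpha, Set.indicator_of_mem hx1, hg _ hx2, mul_zero]
  · rw [barAlpha, Set.indicator_of_notMem hx1, mul_zero]

/-- `Delta s f * Jmap g = Delta s (f ⋅ ᾱ_s g)` -/
theorem Delta_mul_Jmap {s : S} {f g : X → K} (hf : f ∈ FibSet K T s)
    (hg : g ∈ LcSet K X) :
    Delta K T s f * Jmap T g = Delta K T s (f * barAlpha K T s g) := by
  obtain ⟨m, e', h', he', hfib', hsum'⟩ := exists_decomp T hg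
  rw [Jmap_spec T e' h' he' hfib' hsum']
  rw [Finset.mul_sum]
  have hstep : ∀ j, Delta K T s f * Delta K T (e' j) (h' j)
      = Delta K T s (f * barAlpha K T s (h' j)) := by
    intro j
    rw [Delta_mul T hf (hfib' j)]
    exact Delta_incl T (isle_mul_idem_right s (he' j))
      (mul_barAlpha_mem_Fib_mul T hf (hfib' j).1 (hfib' j).2)
  rw [Finset.sum_congr rfl (fun j _ => hstep j)]
  rw [← Delta_finset_sum T Finset.univ s _
    (fun j _ => mul_barAlpha_mem_Fib T hf (hfib' j).1)]
  congr 1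
  rw [← Finset.mul_sum, ← barAlpha_finset_sum, hsum']

theorem mul_vanish_mem_Fib {t : S} {f g : X → K} (hfLc : f ∈ LcSet K X)
    (hg : g ∈ FibSet K T t) : f * g ∈ FibSet K T t :=
  ⟨mul_mem_Lc hfLc hg.1, fun x hx => by
    show f x * g x = 0
    rw [hg.2 x hx, mul_zero]⟩

/-- key: `f' ⋅ ᾱ_e g = f' ⋅ g` when `f'` is supported in `X_e`, `e` idempotent. -/
theorem mul_barAlpha_idem {e : S} (he : e * e = e) {f' g : X → K}
    (hf' : ∀ x ∉ (T.θ e).source, f' x = 0) :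
    f' * barAlpha K T e g = f' * g := by
  funext x
  show f' x * _ = f' x * g x
  by_cases hx : x ∈ (T.θ e).source
  · rw [barAlpha_idem T he, Set.indicator_of_mem hx]
  · rw [hf' x hx, zero_mul, zero_mul]

theorem idem_mul_mem_Fib_mul {e t : S} (he : e * e = e) {f' g : X → K}
    (hf'Lc : f' ∈ LcSet K X) (hf' : ∀ x ∉ (T.θ e).source, f' x = 0)
    (hgLc : g ∈ LcSet K X) (hg : ∀ x ∉ (T.θ t).target, g x = 0) :
    f' * g ∈ FibSet K T (e * t) := by
  refine ⟨mul_mem_Lc hf'Lc hgLc, fun x hx => ?_⟩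
  rw [mem_target_mul] at hx
  show f' x * g x = 0
  by_cases hx1 : x ∈ (T.θ e).target
  · have hx1' : x ∈ (T.θ e).source := by rwa [source_eq_target T he]
    have hx2 : (T.θ e).symm x ∉ (T.θ t).target := fun hmem => hx ⟨hx1, hmem⟩
    rw [symm_idem T he hx1'] at hx2
    rw [hg x hx2, mul_zero]
  · have hx1' : x ∉ (T.θ e).source := by rwa [source_eq_target T he]
    rw [hf' x hx1', zero_mul]

/-- `Jmap f * Delta t g = Delta t (f ⋅ g)` -/
theorem Jmap_mul_Delta {t : S} {f g : X → K} (hf : f ∈ LcSet K X)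
    (hg : g ∈ FibSet K T t) :
    Jmap T f * Delta K T t g = Delta K T t (f * g) := by
  obtain ⟨n, e, h, he, hfib, hsum⟩ := exists_decomp T hf
  rw [Jmap_spec T e h he hfib hsum]
  rw [Finset.sum_mul]
  have hsupp : ∀ i, ∀ x ∉ (T.θ (e i)).source, h i x = 0 := by
    intro i x hx
    rw [source_eq_target T (he i)] at hx
    exact (hfib i).2 x hx
  have hstep : ∀ i, Delta K T (e i) (h i) * Delta K T t g
      = Delta K T t (h i * g) := by
    intro i
    rw [Delta_mul T (hfib i) hg, mul_barAlpha_idem T (he i) (hsupp i)]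
    exact Delta_incl T (isle_idem_left (he i) t)
      (idem_mul_mem_Fib_mul T (he i) (hfib i).1 (hsupp i) hg.1 hg.2)
  rw [Finset.sum_congr rfl (fun i _ => hstep i)]
  rw [← Delta_finset_sum T Finset.univ t _
    (fun i _ => mul_vanish_mem_Fib T (hfib i).1 hg)]
  congr 1
  rw [← Finset.sum_mul, hsum]

/-- `Jmap f * Jmap g = Jmap (f ⋅ g)` -/
theorem Jmap_mul_Jmap {f g : X → K} (hf : f ∈ LcSet K X) (hg : g ∈ LcSet K X) :
    Jmap T f * Jmap T g = Jmap T (f * g) := by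
  obtain ⟨n, e, h, he, hfib, hsum⟩ := exists_decomp T hf
  obtain ⟨m, e', h', he', hfib', hsum'⟩ := exists_decomp T hg
  have hsupp : ∀ i, ∀ x ∉ (T.θ (e i)).source, h i x = 0 := by
    intro i x hx
    rw [source_eq_target T (he i)] at hx
    exact (hfib i).2 x hx
  have hsupp' : ∀ j, ∀ x ∉ (T.θ (e' j)).source, h' j x = 0 := by
    intro j x hx
    rw [source_eq_target T (he' j)] at hx
    exact (hfib' j).2 x hx
  have hmemprod : ∀ (p : Fin n × Fin m),
      h p.1 * h' p.2 ∈ FibSet K T (e p.1 * e' p.2) := by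
    rintro ⟨i, j⟩
    refine ⟨mul_mem_Lc (hfib i).1 (hfib' j).1, fun x hx => ?_⟩
    rw [target_mul_idem T (he i) (he' j)] at hx
    show h i x * h' j x = 0
    rcases (by tauto : x ∉ (T.θ (e i)).source ∨ x ∉ (T.θ (e' j)).source) with h1 | h1
    · rw [hsupp i x h1, zero_mul]
    · rw [hsupp' j x h1, mul_zero]
  rw [Jmap_spec T e h he hfib hsum, Jmap_spec T e' h' he' hfib' hsum']
  rw [Jmap_spec T (ι := Fin n × Fin m) (fun p => e p.1 * e' p.2)
    (fun p => h p.1 * h' p.2)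
    (fun p => idem_mul (he p.1) (he' p.2)) hmemprod
    (by
      rw [← hsum, ← hsum', Finset.sum_mul_sum]
      rw [Fintype.sum_prod_type])]
  rw [Finset.sum_mul_sum, Fintype.sum_prod_type]
  refine Finset.sum_congr rfl (fun i _ => Finset.sum_congr rfl (fun j _ => ?_))
  rw [Delta_mul T (hfib i) (hfib' j), mul_barAlpha_idem T (he i) (hsupp i)]

end ISAux
end PartG
section PartH
namespace ISAux
variable {K : Type*} [Field K] {S X : Type*} [InverseSemigroup S] [TopologicalSpace X]

open scoped Classical in
noncomputable def gPsi (T : AmpleSystem S X) {S' : Type*} (ι : S → S')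
    (p : S' × (X → K)) : CP K T :=
  if hp : ∃ s : S, p.1 = ι s then Delta K T hp.choose p.2 else Jmap T p.2

theorem gPsi_iota (T : AmpleSystem S X) {S' : Type*} {ι : S → S'}
    (hinj : Function.Injective ι) (s : S) (f : X → K) :
    gPsi T ι (ι s, f) = Delta K T s f := by
  have hp : ∃ s' : S, (ι s, f).1 = ι s' := ⟨s, rfl⟩
  rw [gPsi, dif_pos hp]
  rw [show hp.choose = s from (hinj (hp.choose_spec : ι s = ι hp.choose)).symm]

theorem gPsi_one (T : AmpleSystem S X) {S' : Type*} {ι : S → S'} {one : S'}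
    (hne : one ∉ Set.range ι) (f : X → K) :
    gPsi T ι (one, f) = Jmap T f := by
  rw [gPsi, dif_neg]
  rintro ⟨s, hs⟩
  exact hne ⟨s, hs.symm⟩

end ISAux
end PartH


open ISAux

/-- Unitization.  Let `(θ, S, X)` be an ample dynamical system,
and let `(θ⁺, S⁺, X)` be its unitization: `S⁺ = S ⊔ {1}` (here described by an
inverse semigroup `S'` together with an injective multiplicative and
star-preserving embedding `ι : S → S'` and a unit `one ∈ S'` such that every
element of `S'` is either `one` or of the form `ι s`), with `θ⁺` extending `θ`
so that `θ⁺ 1 = id_X`.  Then `L_c(X) ⋊ S ≅ L_c(X) ⋊ S⁺` as `K`-algebras. -/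
theorem crossed_product_unitization_iso
    {K S X : Type*} [Field K] [InverseSemigroup S] [TopologicalSpace X]
    (T : AmpleSystem S X)
    {S' : Type*} [InverseSemigroup S'] (ι : S → S') (one : S')
    (hinj : Function.Injective ι)
    (hmul : ∀ s t : S, ι (s * t) = ι s * ι t)
    (hstar : ∀ s : S, ι (star s) = star (ι s))
    (hone : ∀ a : S', one * a = a ∧ a * one = a)
    (hstarone : star one = one)
    (hcover : ∀ a : S', a = one ∨ ∃ s : S, a = ι s)
    (hne : one ∉ Set.range ι)
    (T' : AmpleSystem S' X)
    (hT : ∀ s : S, T'.θ (ι s) = T.θ s)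
    (hT1 : T'.θ one = PartialHomeomorph.refl X) :
    Nonempty (CP K T ≃ₐ[K] CP K T') := by
  classical
  have hFib : ∀ s : S, FibSet K T' (ι s) = FibSet K T s := by
    intro s; unfold FibSet; rw [hT s]
  have hBar : ∀ s : S, barAlpha K T' (ι s) = barAlpha K T s := by
    intro s; unfold barAlpha; rw [hT s]
  have hTgtOne : (T'.θ one).target = Set.univ := by
    rw [hT1]; rfl
  have hFibOne : FibSet K T' one = LcSet K X := by
    ext f
    constructor
    · exact fun h => h.1
    · refine fun h => ⟨h, fun x hx => absurd ?_ hx⟩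
      rw [hTgtOne]; trivial
  have hBarOne : ∀ g : X → K, barAlpha K T' one g = g := by
    intro g; funext x
    unfold barAlpha
    rw [hT1]
    simp
  have hIotaIdem : ∀ e : S, e * e = e → (ι e) * (ι e) = ι e := by
    intro e he; rw [← hmul, he]
  have hISle : ∀ {s t : S}, ISle s t → ISle (ι s) (ι t) := by
    rintro s t ⟨g, hg, hst⟩
    exact ⟨ι g, hIotaIdem g hg, by rw [hst, hmul]⟩
  have hIotaLeOne : ∀ e : S, e * e = e → ISle (ι e) one :=
    fun e he => ⟨ι e, hIotaIdem e he, ((hone (ι e)).1).symm⟩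
  -- the forward free-algebra morphism
  set PhiF : FreeAlgebra K (S × (X → K)) →ₐ[K] CP K T' :=
    FreeAlgebra.lift K (fun p : S × (X → K) => Delta K T' (ι p.1) p.2) with hPhiF
  have hPhiF_ι : ∀ (s : S) (f : X → K),
      PhiF (FreeAlgebra.ι K (s, f)) = Delta K T' (ι s) f := by
    intro s f
    rw [hPhiF, FreeAlgebra.lift_ι_apply]
  have hPhiRel : ∀ ⦃x y⦄, CPRel K T x y → PhiF x = PhiF y := by
    intro x y hrel
    cases hrel with
    | zero s f hf =>
      rw [map_zero, hPhiF_ι]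
      exact Delta_eq_zero T' (by rw [hFib]; exact hf)
    | add s f g hf hg =>
      rw [map_add, hPhiF_ι, hPhiF_ι, hPhiF_ι]
      exact Delta_add T' (by rw [hFib]; exact hf) (by rw [hFib]; exact hg)
    | smul s c f hf =>
      rw [map_smul, hPhiF_ι, hPhiF_ι]
      exact Delta_smul T' c (by rw [hFib]; exact hf)
    | mul s t f g hf hg =>
      rw [map_mul, hPhiF_ι, hPhiF_ι, hPhiF_ι, hmul, ← hBar]
      exact Delta_mul T' (by rw [hFib]; exact hf) (by rw [hFib]; exact hg)
    | incl s t f hle hf =>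
      rw [hPhiF_ι, hPhiF_ι]
      exact Delta_incl T' (hISle hle) (by rw [hFib]; exact hf)
  set Phi : CP K T →ₐ[K] CP K T' :=
    RingQuot.liftAlgHom K ⟨PhiF, hPhiRel⟩ with hPhi
  -- the backward free-algebra morphism
  set PsiF : FreeAlgebra K (S' × (X → K)) →ₐ[K] CP K T :=
    FreeAlgebra.lift K (gPsi T ι) with hPsiF
  have hPsiF_ι : ∀ (a : S') (f : X → K),
      PsiF (FreeAlgebra.ι K (a, f)) = gPsi T ι (a, f) := by
    intro a f
    rw [hPsiF, FreeAlgebra.lift_ι_apply]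
  have hPsiRel : ∀ ⦃x y⦄, CPRel K T' x y → PsiF x = PsiF y := by
    intro x y hrel
    cases hrel with
    | zero a f hf =>
      rw [map_zero, hPsiF_ι]
      rcases hcover a with rfl | ⟨s, rfl⟩
      · rw [gPsi_one T hne]
        rw [hFibOne] at hf
        exact Jmap_not_Lc T hf
      · rw [gPsi_iota T hinj]
        rw [hFib] at hf
        exact Delta_eq_zero T hf
    | add a f g hf hg =>
      rw [map_add, hPsiF_ι, hPsiF_ι, hPsiF_ι]
      rcases hcover a with rfl | ⟨s, rfl⟩
      · rw [gPsi_one T hne, gPsi_one T hne, gPsi_one T hne]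
        rw [hFibOne] at hf hg
        exact Jmap_add T hf hg
      · rw [gPsi_iota T hinj, gPsi_iota T hinj, gPsi_iota T hinj]
        rw [hFib] at hf hg
        exact Delta_add T hf hg
    | smul a c f hf =>
      rw [map_smul, hPsiF_ι, hPsiF_ι]
      rcases hcover a with rfl | ⟨s, rfl⟩
      · rw [gPsi_one T hne, gPsi_one T hne]
        rw [hFibOne] at hf
        exact Jmap_smul T c hf
      · rw [gPsi_iota T hinj, gPsi_iota T hinj]
        rw [hFib] at hf
        exact Delta_smul T c hf
    | mul a b f g hf hg =>
      rw [map_mul, hPsiF_ι, hPsiF_ι, hPsiF_ι]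
      rcases hcover a with rfl | ⟨s, rfl⟩
      · rcases hcover b with rfl | ⟨t, rfl⟩
        · rw [(hone _).1, hBarOne]
          rw [gPsi_one T hne, gPsi_one T hne, gPsi_one T hne]
          rw [hFibOne] at hf hg
          exact Jmap_mul_Jmap T hf hg
        · rw [(hone (ι t)).1, hBarOne]
          rw [gPsi_one T hne, gPsi_iota T hinj, gPsi_iota T hinj]
          rw [hFibOne] at hf
          rw [hFib] at hg
          exact Jmap_mul_Delta T hf hg
      · rcases hcover b with rfl | ⟨t, rfl⟩
        · rw [(hone (ι s)).2, hBar]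
          rw [gPsi_iota T hinj, gPsi_one T hne, gPsi_iota T hinj]
          rw [hFib] at hf
          rw [hFibOne] at hg
          exact Delta_mul_Jmap T hf hg
        · rw [← hmul, hBar]
          rw [gPsi_iota T hinj, gPsi_iota T hinj, gPsi_iota T hinj]
          rw [hFib] at hf hg
          exact Delta_mul T hf hg
    | incl a b f hle hf =>
      rw [hPsiF_ι, hPsiF_ι]
      rcases hcover a with rfl | ⟨s, rfl⟩
      · rcases hcover b with rfl | ⟨t, rfl⟩
        · rfl
        · exfalso
          obtain ⟨g', hg', heq⟩ := hle
          rcases hcover g' with rfl | ⟨g, rfl⟩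
          · rw [(hone (ι t)).2] at heq
            exact hne ⟨t, heq.symm⟩
          · rw [← hmul] at heq
            exact hne ⟨t * g, heq.symm⟩
      · rcases hcover b with rfl | ⟨t, rfl⟩
        · -- ι s ≤ one : forces s idempotent
          obtain ⟨g', hg', heq⟩ := hle
          rw [(hone g').1] at heq
          rcases hcover g' with rfl | ⟨g, rfl⟩
          · exact absurd heq (fun h => hne ⟨s, h⟩)
          · have hsg : s = g := hinj heq
            subst hsg
            have hsidem : s * s = s := by
              apply hinj
              rw [hmul]
              exact hg'
            rw [gPsi_iota T hinj, gPsi_one T hne]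
            rw [hFib] at hf
            exact (Jmap_of_Fib T hsidem hf).symm
        · rw [gPsi_iota T hinj, gPsi_iota T hinj]
          obtain ⟨g', hg', heq⟩ := hle
          rcases hcover g' with rfl | ⟨g, rfl⟩
          · rw [(hone (ι t)).2] at heq
            have hst : s = t := hinj heq
            subst hst
            rfl
          · rw [← hmul] at heq
            have hst : s = t * g := hinj heq
            have hgidem : g * g = g := by
              apply hinj
              rw [hmul]
              exact hg'
            rw [hFib] at hf
            exact Delta_incl T ⟨g, hgidem, hst⟩ hf
  set Psi : CP K T' →ₐ[K] CP K T :=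
    RingQuot.liftAlgHom K ⟨PsiF, hPsiRel⟩ with hPsi
  have hPhiDelta : ∀ (s : S) (f : X → K), Phi (Delta K T s f) = Delta K T' (ι s) f := by
    intro s f
    rw [Delta, hPhi, RingQuot.liftAlgHom_mkAlgHom_apply, hPhiF_ι]
  have hPsiDelta : ∀ (a : S') (f : X → K), Psi (Delta K T' a f) = gPsi T ι (a, f) := by
    intro a f
    rw [Delta, hPsi, RingQuot.liftAlgHom_mkAlgHom_apply, hPsiF_ι]
  have h1 : Psi.comp Phi = AlgHom.id K (CP K T) := by
    apply RingQuot.ringQuot_ext'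
    apply FreeAlgebra.hom_ext
    funext p
    show Psi (Phi (RingQuot.mkAlgHom K (CPRel K T) (FreeAlgebra.ι K p)))
      = RingQuot.mkAlgHom K (CPRel K T) (FreeAlgebra.ι K p)
    have hp : RingQuot.mkAlgHom K (CPRel K T) (FreeAlgebra.ι K p) = Delta K T p.1 p.2 := rfl
    rw [hp, hPhiDelta, hPsiDelta, gPsi_iota T hinj]
  have h2 : Phi.comp Psi = AlgHom.id K (CP K T') := by
    apply RingQuot.ringQuot_ext'
    apply FreeAlgebra.hom_ext
    funext p
    show Phi (Psi (RingQuot.mkAlgHom K (CPRel K T') (FreeAlgebra.ι K p)))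
      = RingQuot.mkAlgHom K (CPRel K T') (FreeAlgebra.ι K p)
    have hp : RingQuot.mkAlgHom K (CPRel K T') (FreeAlgebra.ι K p) = Delta K T' p.1 p.2 := rfl
    rw [hp, hPsiDelta]
    rcases hcover p.1 with hpp | ⟨s, hpp⟩ <;> rw [hpp]
    · rw [gPsi_one T hne]
      by_cases hLc : p.2 ∈ LcSet K X
      · obtain ⟨n, e, h, he, hfib, hsum⟩ := exists_decomp T hLc
        rw [Jmap_spec T e h he hfib hsum, map_sum]
        have hterm : ∀ i, Phi (Delta K T (e i) (h i)) = Delta K T' one (h i) := by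
          intro i
          rw [hPhiDelta]
          exact Delta_incl T' (hIotaLeOne (e i) (he i)) (by rw [hFib]; exact hfib i)
        rw [Finset.sum_congr rfl (fun i _ => hterm i)]
        rw [← Delta_finset_sum T' Finset.univ one h
          (fun i _ => by rw [hFibOne]; exact (hfib i).1)]
        rw [hsum]
      · rw [Jmap_not_Lc T hLc, map_zero]
        exact (Delta_eq_zero T' (by rw [hFibOne]; exact hLc)).symm
    · rw [gPsi_iota T hinj, hPhiDelta]
  exact ⟨AlgEquiv.ofAlgHom Phi Psi h2 h1⟩
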